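/- Under the assumptions: g is L-Lipschitz, μ_k = 2(f_k - f_{k+1}) + (g_k + g_{k+1})ᵀ s_k, m ≥ 3 an integer, 0 < C < 1, and t_k = (m/(m-2)) μ_k/‖s_k‖² if μ_k > 0 and t_k = C μ_k/‖s_k‖² if μ_k ≤ 0, then −CL ≤ t_k ≤ mL/(m-2). -/

import Mathlib

open scoped RealInnerProductSpace

lemma mu_abs_bound {n : ℕ} (f : EuclideanSpace ℝ (Fin n) → ℝ) (L : ℝ) (hL : 0 < L)
    (hf : ContDiff ℝ 1 f)
    (hlip : LipschitzWith (Real.toNNReal L) (gradient f))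
    (xk xk1 : EuclideanSpace ℝ (Fin n)) :
    |2 * (f xk - f xk1) + ⟪gradient f xk + gradient f xk1, xk1 - xk⟫|
      ≤ L * ‖xk1 - xk‖ ^ 2 := by
  set s : EuclideanSpace ℝ (Fin n) := xk1 - xk with hs
  have hdiff : Differentiable ℝ f := hf.differentiable one_ne_zero
  have hgrad : ∀ x, HasFDerivAt f (InnerProductSpace.toDual ℝ _ (gradient f x)) x := by
    intro x
    exact hasGradientAt_iff_hasFDerivAt.mp (hdiff x).hasGradientAt
  -- the function along the segment
  set γ : ℝ → EuclideanSpace ℝ (Fin n) := fun τ => xk + τ • s with hγ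
  have hγd : ∀ τ : ℝ, HasDerivAt γ s τ := by
    intro τ
    have : HasDerivAt (fun τ : ℝ => τ • s) ((1 : ℝ) • s) τ :=
      (hasDerivAt_id τ).smul_const s
    rw [one_smul] at this; exact this.const_add xk
  have hcomp : ∀ τ : ℝ, HasDerivAt (fun τ => f (γ τ)) ⟪gradient f (γ τ), s⟫ τ := by
    intro τ
    have := (hgrad (γ τ)).comp_hasDerivAt τ (hγd τ)
    rw [InnerProductSpace.toDual_apply_apply] at this; exact this
  obtain ⟨c, hc, hslope⟩ :=
    exists_hasDerivAt_eq_slope (fun τ => f (γ τ)) (fun τ => ⟪gradient f (γ τ), s⟫)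
      (by norm_num : (0:ℝ) < 1)
      (fun τ _ => (hcomp τ).continuousAt.continuousWithinAt)
      (fun τ _ => hcomp τ)
  have hγ0 : γ 0 = xk := by simp [hγ]
  have hγ1 : γ 1 = xk1 := by simp [hγ, hs]
  have hslope' : ⟪gradient f (γ c), s⟫ = f xk1 - f xk := by
    rw [hslope, hγ0, hγ1]; ring
  -- rewrite μ
  have hmu : 2 * (f xk - f xk1) + ⟪gradient f xk + gradient f xk1, s⟫
      = ⟪gradient f xk - gradient f (γ c), s⟫
        + ⟪gradient f xk1 - gradient f (γ c), s⟫ := by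
    rw [inner_sub_left, inner_sub_left, inner_add_left, hslope']
    ring
  rw [hmu]
  have hL' : (Real.toNNReal L : ℝ) = L := Real.coe_toNNReal L hL.le
  have hlipd : ∀ a b, ‖gradient f a - gradient f b‖ ≤ L * ‖a - b‖ := by
    intro a b
    have := hlip.dist_le_mul a b
    rwa [dist_eq_norm, dist_eq_norm, hL'] at this
  have h1 : ‖xk - γ c‖ = c * ‖s‖ := by
    have : xk - γ c = -(c • s) := by simp [hγ]
    rw [this, norm_neg, norm_smul, Real.norm_eq_abs, abs_of_pos hc.1]
  have h2 : ‖xk1 - γ c‖ = (1 - c) * ‖s‖ := by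
    have : xk1 - γ c = (1 - c) • s := by
      simp [hγ, hs, sub_smul, one_smul]; abel
    rw [this, norm_smul, Real.norm_eq_abs, abs_of_pos (by linarith [hc.2])]
  calc |⟪gradient f xk - gradient f (γ c), s⟫
        + ⟪gradient f xk1 - gradient f (γ c), s⟫|
      ≤ |⟪gradient f xk - gradient f (γ c), s⟫|
        + |⟪gradient f xk1 - gradient f (γ c), s⟫| := abs_add_le _ _
    _ ≤ ‖gradient f xk - gradient f (γ c)‖ * ‖s‖
        + ‖gradient f xk1 - gradient f (γ c)‖ * ‖s‖ := by
        gcongr <;> exact abs_real_inner_le_norm _ _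
    _ ≤ (L * ‖xk - γ c‖) * ‖s‖ + (L * ‖xk1 - γ c‖) * ‖s‖ := by
        gcongr <;> exact hlipd _ _
    _ = L * ‖s‖ ^ 2 := by rw [h1, h2]; ring

/-- If the gradient `g` of `f` is `L`-Lipschitz, `μ_k` is defined from function values and
gradients, `m ≥ 3` is an integer, `0 < C < 1`, and `t_k` is defined piecewise according to
the sign of `μ_k`, then `−CL ≤ t_k ≤ mL/(m-2)`. -/
theorem stmt_3 {n : ℕ} (f : EuclideanSpace ℝ (Fin n) → ℝ) (L C : ℝ) (m : ℕ)
    (hm : 3 ≤ m) (hC0 : 0 < C) (hC1 : C < 1) (hL : 0 < L)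
    (hf : ContDiff ℝ 1 f)
    (hlip : LipschitzWith (Real.toNNReal L) (gradient f))
    (xk xk1 : EuclideanSpace ℝ (Fin n)) (hne : xk1 ≠ xk)
    (μ t : ℝ)
    (hμ : μ = 2 * (f xk - f xk1) + ⟪gradient f xk + gradient f xk1, xk1 - xk⟫)
    (ht : t = if 0 < μ then ((m : ℝ) / ((m : ℝ) - 2)) * μ / ‖xk1 - xk‖ ^ 2
              else C * μ / ‖xk1 - xk‖ ^ 2) :
    -C * L ≤ t ∧ t ≤ (m : ℝ) * L / ((m : ℝ) - 2) := by
  have hsnorm : 0 < ‖xk1 - xk‖ := by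
    rw [norm_pos_iff, sub_ne_zero]; exact hne
  have hsq : 0 < ‖xk1 - xk‖ ^ 2 := by positivity
  have habs : |μ| ≤ L * ‖xk1 - xk‖ ^ 2 := by
    rw [hμ]; exact mu_abs_bound f L hL hf hlip xk xk1
  have hmu_le : μ ≤ L * ‖xk1 - xk‖ ^ 2 := (abs_le.mp habs).2
  have hmu_ge : -(L * ‖xk1 - xk‖ ^ 2) ≤ μ := (abs_le.mp habs).1
  have hm2 : (0:ℝ) < (m : ℝ) - 2 := by
    have : (3:ℝ) ≤ (m:ℝ) := by exact_mod_cast hm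
    linarith
  have hmpos : (0:ℝ) < (m : ℝ) := by linarith
  have hmfrac : (0:ℝ) < (m : ℝ) / ((m : ℝ) - 2) := div_pos hmpos hm2
  have hCL : 0 < C * L := mul_pos hC0 hL
  have hmL : 0 < (m : ℝ) * L / ((m : ℝ) - 2) := div_pos (mul_pos hmpos hL) hm2
  rw [ht]
  by_cases hpos : 0 < μ
  · rw [if_pos hpos]
    constructor
    · have : 0 ≤ (m : ℝ) / ((m : ℝ) - 2) * μ / ‖xk1 - xk‖ ^ 2 := by positivity
      nlinarith
    · rw [div_le_div_iff₀ hsq hm2]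
      have h1 : (m : ℝ) / ((m : ℝ) - 2) * μ * ((m : ℝ) - 2) = (m : ℝ) * μ := by
        field_simp
      rw [h1]
      calc (m : ℝ) * μ ≤ (m : ℝ) * (L * ‖xk1 - xk‖ ^ 2) := by
            exact mul_le_mul_of_nonneg_left hmu_le hmpos.le
        _ = (m : ℝ) * L * ‖xk1 - xk‖ ^ 2 := by ring
  · rw [if_neg hpos]
    push_neg at hpos
    constructor
    · rw [le_div_iff₀ hsq]
      nlinarith
    · have : C * μ / ‖xk1 - xk‖ ^ 2 ≤ 0 := by
        apply div_nonpos_of_nonpos_of_nonneg _ hsq.le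
        exact mul_nonpos_of_nonneg_of_nonpos hC0.le hpos
      linarith
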